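/- Let r ≥ 1 and let ℓ be an ordering of λK_{n_1,…,n_k}. If ms_r(ℓ) = r·n_1, then for every j ∈ [λN·n_1 − r_2·n_1] and every 1 ≤ i ≤ u, the edges ℓ^{−1}(j) and ℓ^{−1}(r_2·n_1 + j) are incident with the same vertex of N_i. If cms_r(ℓ) = r·n_1, then for every j ∈ [λN·n_1] and every 1 ≤ i ≤ u, the edges ℓ^{−1}(j) and ℓ^{−1}((r_2·n_1 + j) mod λN·n_1) are incident with the same vertex of N_i. -/

import Mathlib

/-- A hypergraph: a finite vertex type, a finite edge (label) type and an incidence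
relation; distinct (parallel) edges may be incident with the same vertices. -/
structure Hypergraph' where
  V : Type
  E : Type
  fintV : Fintype V
  fintE : Fintype E
  inc : E → V → Bool

namespace Hypergraph'

/-- The number ε of edges of `H`. -/
def edgeCard (H : Hypergraph') : ℕ :=
  letI := H.fintE
  Fintype.card H.E

/-- The degree of a vertex: the number of edges incident with it. -/
def degree (H : Hypergraph') (v : H.V) : ℕ :=
  letI := H.fintE
  (Finset.univ.filter (fun e => H.inc e v = true)).card

/-- The maximum degree Δ(H). -/
def maxDegree (H : Hypergraph') : ℕ :=
  letI := H.fintV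
  Finset.univ.sup H.degree

/-- An ordering (labelling) of `H`, encoded by its ε-periodic enumeration:
`f i` is the edge whose label is `i % ε`; on `[ε]`, `f` is a bijection onto the
edge set. -/
structure IsOrdering (H : Hypergraph') (f : ℕ → H.E) : Prop where
  periodic : ∀ i, f (i + H.edgeCard) = f i
  inj : ∀ i j, i < H.edgeCard → j < H.edgeCard → f i = f j → i = j
  surj : ∀ e : H.E, ∃ i, i < H.edgeCard ∧ f i = e

/-- The degree of `v` in the hypergraph `H(S)` formed (with multiplicity) by the
sequence `S` of `s` (cyclically) consecutive edges with labels `j, …, j+s-1`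
taken modulo ε. -/
def windowDeg (H : Hypergraph') (f : ℕ → H.E) (j s : ℕ) (v : H.V) : ℕ :=
  ((Finset.range s).filter (fun i => H.inc (f (j + i)) v = true)).card

/-- Every sequence of `s` consecutive edges of the ordering `f` forms a hypergraph of
maximum degree at most `r`.  A window of `s` consecutive edges starts at a label `j`
with `j + s ≤ (a+1)·ε`, where `a·ε ≤ s < (a+1)·ε` (i.e. `a = s / ε`). -/
def msOK (H : Hypergraph') (f : ℕ → H.E) (r s : ℕ) : Prop :=
  ∀ j v, j + s ≤ (s / H.edgeCard + 1) * H.edgeCard → H.windowDeg f j s v ≤ r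

/-- Every sequence of `s` cyclically consecutive edges of the ordering `f` forms a
hypergraph of maximum degree at most `r`. -/
def cmsOK (H : Hypergraph') (f : ℕ → H.E) (r s : ℕ) : Prop :=
  ∀ j v, H.windowDeg f j s v ≤ r

/-- ms_r(ℓ): the largest `s` such that every `s` consecutive edges of `ℓ` form a
hypergraph of maximum degree at most `r`. -/
noncomputable def msrOf (H : Hypergraph') (f : ℕ → H.E) (r : ℕ) : ℕ :=
  sSup {s | H.msOK f r s}

/-- cms_r(ℓ). -/
noncomputable def cmsrOf (H : Hypergraph') (f : ℕ → H.E) (r : ℕ) : ℕ :=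
  sSup {s | H.cmsOK f r s}

/-- ms_r(H): the maximum of ms_r(ℓ) over all orderings ℓ of H. -/
noncomputable def msr (H : Hypergraph') (r : ℕ) : ℕ :=
  sSup {s | ∃ f, H.IsOrdering f ∧ H.msOK f r s}

/-- cms_r(H): the maximum of cms_r(ℓ) over all orderings ℓ of H. -/
noncomputable def cmsr (H : Hypergraph') (r : ℕ) : ℕ :=
  sSup {s | ∃ f, H.IsOrdering f ∧ H.cmsOK f r s}

end Hypergraph'

/-- The complete multi-k-partite k-graph λ·K_{n 0, …, n (k-1)} with edge
multiplicity `lam`: the vertex set is the disjoint union of the parts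
`N_i = Fin (n i)`, and for each choice of one vertex from each part there are
`lam` parallel edges incident with exactly those `k` vertices. -/
def lamK (k lam : ℕ) (n : Fin k → ℕ) : Hypergraph' where
  V := Σ i : Fin k, Fin (n i)
  E := Fin lam × (∀ i : Fin k, Fin (n i))
  fintV := inferInstance
  fintE := inferInstance
  inc := fun e v => decide (e.2 v.1 = v.2)

theorem claim_aux
    (k lam u : ℕ) (n : Fin k → ℕ) (h0k : 0 < k)
    (hu1 : 1 ≤ u)
    (hpos : ∀ i, 1 ≤ n i)
    (heq : ∀ i : Fin k, (i : ℕ) < u → n i = n ⟨0, h0k⟩)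
    (N : ℕ)
    (hN : N = ∏ i ∈ Finset.univ.filter (fun i : Fin k => (i : ℕ) ≠ 0), n i)
    (r r1 r2 : ℕ) (hr : 1 ≤ r)
    (hrdec : r = r1 * (lam * N) + r2) (hr2 : r2 < lam * N)
    (f : ℕ → (lamK k lam n).E) (hf : (lamK k lam n).IsOrdering f) :
    (((lamK k lam n).msrOf f r = r * n ⟨0, h0k⟩) →
      ∀ j, j < lam * N * n ⟨0, h0k⟩ - r2 * n ⟨0, h0k⟩ → ∀ i : Fin k, (i : ℕ) < u →
        (f j).2 i = (f (r2 * n ⟨0, h0k⟩ + j)).2 i) ∧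
    (((lamK k lam n).cmsrOf f r = r * n ⟨0, h0k⟩) →
      ∀ j, j < lam * N * n ⟨0, h0k⟩ → ∀ i : Fin k, (i : ℕ) < u →
        (f j).2 i = (f ((r2 * n ⟨0, h0k⟩ + j) % (lam * N * n ⟨0, h0k⟩))).2 i) := by
  classical
  have hNpos : 1 ≤ N := by
    rw [hN]; exact Finset.one_le_prod' (fun i _ => hpos i)
  have hn0 : 1 ≤ n ⟨0, h0k⟩ := hpos _
  have hprod : ∏ i : Fin k, n i = n ⟨0, h0k⟩ * N := by
    rw [hN, ← Finset.mul_prod_erase Finset.univ n (Finset.mem_univ ⟨0, h0k⟩)]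
    congr 1
    apply Finset.prod_congr _ (fun _ _ => rfl)
    ext j
    simp [Finset.mem_erase, Fin.ext_iff]
  have hcard : (lamK k lam n).edgeCard = lam * N * n ⟨0, h0k⟩ := by
    rw [Hypergraph'.edgeCard]
    show @Fintype.card (Fin lam × ((i : Fin k) → Fin (n i))) inferInstance = _
    simp only [Fintype.card_prod, Fintype.card_fin, Fintype.card_pi]
    rw [hprod]; ring
  have hs : r * n ⟨0, h0k⟩ = r1 * (lamK k lam n).edgeCard + r2 * n ⟨0, h0k⟩ := by
    rw [hcard, hrdec]; ring
  have hr2n : r2 * n ⟨0, h0k⟩ < (lamK k lam n).edgeCard := by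
    rw [hcard]
    exact Nat.mul_lt_mul_of_lt_of_le hr2 le_rfl (by omega)
  have hεpos : 0 < (lamK k lam n).edgeCard := by omega
  -- periodicity
  have hper : ∀ m x, f (x + m * (lamK k lam n).edgeCard) = f x := by
    intro m
    induction m with
    | zero => intro x; simp
    | succ m ih =>
      intro x
      have h1 : x + (m + 1) * (lamK k lam n).edgeCard
          = (x + m * (lamK k lam n).edgeCard) + (lamK k lam n).edgeCard := by ring
      rw [h1, hf.periodic, ih]
  have hmod : ∀ x, f (x % (lamK k lam n).edgeCard) = f x := by
    intro x
    have h2 := hper (x / (lamK k lam n).edgeCard) (x % (lamK k lam n).edgeCard)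
    rw [Nat.mod_add_div'] at h2
    exact h2.symm
  -- windowDeg as a sum
  have wsum : ∀ j s' (v : (lamK k lam n).V), (lamK k lam n).windowDeg f j s' v =
      ∑ m ∈ Finset.range s', (if (lamK k lam n).inc (f (j + m)) v = true then 1 else 0) := by
    intro j s' v
    rw [Hypergraph'.windowDeg, Finset.card_filter]
  -- sum of window degrees over a part equals window length
  have hsum : ∀ j s' (i : Fin k),
      ∑ w : Fin (n i), (lamK k lam n).windowDeg f j s' ⟨i, w⟩ = s' := by
    intro j s' i
    have h3 : ∀ w : Fin (n i), (lamK k lam n).windowDeg f j s' ⟨i, w⟩ =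
        ∑ m ∈ Finset.range s', (if (f (j + m)).2 i = w then 1 else 0) := by
      intro w
      refine (wsum j s' ⟨i, w⟩).trans ?_
      apply Finset.sum_congr rfl
      intro m _
      simp only [lamK, decide_eq_true_eq]
    simp only [h3]
    rw [Finset.sum_comm]
    simp
  -- exactness: each window degree equals r
  have hexact : ∀ j (i : Fin k), (i : ℕ) < u →
      (∀ w : Fin (n i), (lamK k lam n).windowDeg f j (r * n ⟨0, h0k⟩) ⟨i, w⟩ ≤ r) →
      ∀ w : Fin (n i), (lamK k lam n).windowDeg f j (r * n ⟨0, h0k⟩) ⟨i, w⟩ = r := by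
    intro j i hi hle w
    by_contra hne
    have hlt' : (lamK k lam n).windowDeg f j (r * n ⟨0, h0k⟩) ⟨i, w⟩ < r :=
      lt_of_le_of_ne (hle w) hne
    have hstrict : ∑ w' : Fin (n i), (lamK k lam n).windowDeg f j (r * n ⟨0, h0k⟩) ⟨i, w'⟩ <
        ∑ _w' : Fin (n i), r :=
      Finset.sum_lt_sum (fun w' _ => hle w') ⟨w, Finset.mem_univ w, hlt'⟩
    rw [hsum] at hstrict
    rw [Finset.sum_const, Finset.card_univ, Fintype.card_fin, smul_eq_mul] at hstrict
    rw [heq i hi, Nat.mul_comm] at hstrict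
    omega
  -- shifting a window by one
  have key : ∀ j (v : (lamK k lam n).V),
      (lamK k lam n).windowDeg f j (r * n ⟨0, h0k⟩) v = r →
      (lamK k lam n).windowDeg f (j + 1) (r * n ⟨0, h0k⟩) v = r →
      (lamK k lam n).inc (f j) v = (lamK k lam n).inc (f (j + r * n ⟨0, h0k⟩)) v := by
    intro j v h1 h2
    have e1 : (lamK k lam n).windowDeg f j (r * n ⟨0, h0k⟩ + 1) v =
        (lamK k lam n).windowDeg f j (r * n ⟨0, h0k⟩) v +
          (if (lamK k lam n).inc (f (j + r * n ⟨0, h0k⟩)) v = true then 1 else 0) := by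
      rw [wsum, wsum, Finset.sum_range_succ]
    have e2 : (lamK k lam n).windowDeg f j (r * n ⟨0, h0k⟩ + 1) v =
        (lamK k lam n).windowDeg f (j + 1) (r * n ⟨0, h0k⟩) v +
          (if (lamK k lam n).inc (f j) v = true then 1 else 0) := by
      rw [wsum, wsum, Finset.sum_range_succ']
      congr 1
      apply Finset.sum_congr rfl
      intro m _
      have h4 : j + (m + 1) = j + 1 + m := by ring
      rw [h4]
    have hif : (if (lamK k lam n).inc (f j) v = true then (1:ℕ) else 0) =
        (if (lamK k lam n).inc (f (j + r * n ⟨0, h0k⟩)) v = true then 1 else 0) := by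
      omega
    cases hb1 : (lamK k lam n).inc (f j) v <;>
      cases hb2 : (lamK k lam n).inc (f (j + r * n ⟨0, h0k⟩)) v
    · rfl
    · exfalso; simp [hb1, hb2] at hif
    · exfalso; simp [hb1, hb2] at hif
    · rfl
  -- main step
  have main : ∀ j (i : Fin k), (i : ℕ) < u →
      (∀ w : Fin (n i), (lamK k lam n).windowDeg f j (r * n ⟨0, h0k⟩) ⟨i, w⟩ ≤ r) →
      (∀ w : Fin (n i), (lamK k lam n).windowDeg f (j + 1) (r * n ⟨0, h0k⟩) ⟨i, w⟩ ≤ r) →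
      (f j).2 i = (f (r2 * n ⟨0, h0k⟩ + j)).2 i := by
    intro j i hi hle1 hle2
    have he1 := hexact j i hi hle1
    have he2 := hexact (j + 1) i hi hle2
    have hkey := key j ⟨i, (f j).2 i⟩ (he1 _) (he2 _)
    have hincj : (lamK k lam n).inc (f j) ⟨i, (f j).2 i⟩ = true := by
      show decide ((f j).2 i = (f j).2 i) = true
      simp
    rw [hincj] at hkey
    have h3 : (f (j + r * n ⟨0, h0k⟩)).2 i = (f j).2 i := by
      have h5 : decide ((f (j + r * n ⟨0, h0k⟩)).2 i = (f j).2 i) = true := hkey.symm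
      simpa using h5
    have h4 : f (j + r * n ⟨0, h0k⟩) = f (r2 * n ⟨0, h0k⟩ + j) := by
      have harg : j + r * n ⟨0, h0k⟩ = (r2 * n ⟨0, h0k⟩ + j) + r1 * (lamK k lam n).edgeCard := by
        rw [hs]; ring
      rw [harg, hper]
    rw [h4] at h3
    exact h3.symm
  have hdiv : (r * n ⟨0, h0k⟩) / (lamK k lam n).edgeCard = r1 := by
    rw [hs, Nat.mul_comm r1, Nat.mul_add_div hεpos, Nat.div_eq_of_lt hr2n]; omega
  constructor
  · -- ms case
    intro hms j hj i hi
    rw [Hypergraph'.msrOf] at hms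
    have h0 : (0 : ℕ) ∈ {s' | (lamK k lam n).msOK f r s'} := by
      intro j' v _
      simp [Hypergraph'.windowDeg]
    have hOK : (lamK k lam n).msOK f r (r * n ⟨0, h0k⟩) := by
      by_cases hb : BddAbove {s' | (lamK k lam n).msOK f r s'}
      · have h6 := Nat.sSup_mem ⟨0, h0⟩ hb
        rwa [hms] at h6
      · exfalso
        rw [csSup_of_not_bddAbove hb, csSup_empty] at hms
        have : (0:ℕ) = r * n ⟨0, h0k⟩ := hms
        have := Nat.mul_pos hr hn0
        omega
    have hj' : j < (lamK k lam n).edgeCard - r2 * n ⟨0, h0k⟩ := by rw [hcard]; exact hj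
    have hc1 : j + r * n ⟨0, h0k⟩ ≤
        ((r * n ⟨0, h0k⟩) / (lamK k lam n).edgeCard + 1) * (lamK k lam n).edgeCard := by
      rw [hdiv, Nat.add_mul, Nat.one_mul]; omega
    have hc2 : (j + 1) + r * n ⟨0, h0k⟩ ≤
        ((r * n ⟨0, h0k⟩) / (lamK k lam n).edgeCard + 1) * (lamK k lam n).edgeCard := by
      rw [hdiv, Nat.add_mul, Nat.one_mul]; omega
    exact main j i hi (fun w => hOK j ⟨i, w⟩ hc1) (fun w => hOK (j + 1) ⟨i, w⟩ hc2)
  · -- cms case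
    intro hcms j hj i hi
    rw [Hypergraph'.cmsrOf] at hcms
    have h0 : (0 : ℕ) ∈ {s' | (lamK k lam n).cmsOK f r s'} := by
      intro j' v
      simp [Hypergraph'.windowDeg]
    have hOK : (lamK k lam n).cmsOK f r (r * n ⟨0, h0k⟩) := by
      by_cases hb : BddAbove {s' | (lamK k lam n).cmsOK f r s'}
      · have h6 := Nat.sSup_mem ⟨0, h0⟩ hb
        rwa [hcms] at h6
      · exfalso
        rw [csSup_of_not_bddAbove hb, csSup_empty] at hcms
        have : (0:ℕ) = r * n ⟨0, h0k⟩ := hcms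
        have := Nat.mul_pos hr hn0
        omega
    have hmain := main j i hi (fun w => hOK j ⟨i, w⟩) (fun w => hOK (j + 1) ⟨i, w⟩)
    have hmod' : f ((r2 * n ⟨0, h0k⟩ + j) % (lam * N * n ⟨0, h0k⟩)) = f (r2 * n ⟨0, h0k⟩ + j) := by
      rw [← hcard, hmod]
    rw [hmod']
    exact hmain

/-- Claim: if `ms_r(ℓ) = r·n_1` (resp. `cms_r(ℓ) = r·n_1`) for an ordering `ℓ` of
`λK_{n_1,…,n_k}`, then the edges with labels `j` and `r_2·n_1 + j` (resp. taken
mod `λN·n_1`) are incident with the same vertex of `N_i` for each `i = 1, …, u`.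
The ordering is encoded by its periodic enumeration `f` (so `f j = ℓ⁻¹(j)`), and
"incident with the same vertex of `N_i`" says the two edges choose the same vertex
in the `i`-th part. -/
theorem claim_same_vertex
    (k lam u : ℕ) (n : Fin k → ℕ)
    (hk : 2 ≤ k) (hlam : 1 ≤ lam)
    (hu1 : 1 ≤ u) (huk : u ≤ k)
    (hpos : ∀ i, 1 ≤ n i)
    (hmono : ∀ i j : Fin k, i ≤ j → n i ≤ n j)
    (heq : ∀ i : Fin k, (i : ℕ) < u → n i = n ⟨0, by omega⟩)
    (hlt : ∀ i : Fin k, u ≤ (i : ℕ) → n ⟨0, by omega⟩ < n i)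
    (N N' : ℕ)
    (hN : N = ∏ i ∈ Finset.univ.filter (fun i : Fin k => (i : ℕ) ≠ 0), n i)
    (hN' : N' = ∏ i ∈ Finset.univ.filter (fun i : Fin k => u ≤ (i : ℕ)), n i)
    (r r1 r2 : ℕ) (hr : 1 ≤ r)
    (hrdec : r = r1 * (lam * N) + r2) (hr2 : r2 < lam * N)
    (f : ℕ → (lamK k lam n).E) (hf : (lamK k lam n).IsOrdering f) :
    (((lamK k lam n).msrOf f r = r * n ⟨0, by omega⟩) →
      ∀ j, j < lam * N * n ⟨0, by omega⟩ - r2 * n ⟨0, by omega⟩ → ∀ i : Fin k, (i : ℕ) < u →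
        (f j).2 i = (f (r2 * n ⟨0, by omega⟩ + j)).2 i) ∧
    (((lamK k lam n).cmsrOf f r = r * n ⟨0, by omega⟩) →
      ∀ j, j < lam * N * n ⟨0, by omega⟩ → ∀ i : Fin k, (i : ℕ) < u →
        (f j).2 i = (f ((r2 * n ⟨0, by omega⟩ + j) % (lam * N * n ⟨0, by omega⟩))).2 i) := by
  exact claim_aux k lam u n (by omega) hu1 hpos heq N hN r r1 r2 hr hrdec hr2 f hf
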